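/- Let D ⊆ ℝ^d be a nonempty closed set, x ∉ D with unique metric projection p = P_D(x), and suppose near p, after a rotation, ∂D is the graph of a Lipschitz function φ : V → ℝ (V ⊆ ℝ^{d−1} open) with D locally equal to the subgraph {(y, y_d) : y_d ≤ φ(y)}. Writing p = (y*, φ(y*)) and x = (x̃, x_d), the first-order optimality condition 0 ∈ ∂Φ(y*) for Φ(y) = ½|(y, φ(y)) − x|² implies that x − p = Σ_{j=1}^m α_j lim_{i→∞} n_D(y_i^{(j)}, φ(y_i^{(j)})) for some m ≥ 1, scalars α_j ≥ 0, and sequences y_i^{(j)} → y* at which φ is differentiable and the unit normals n_D(y, φ(y)) = (−∇φ(y), 1)/√(|∇φ(y)|² + 1) converge. -/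

import Mathlib

open Filter Topology

/-- The inclusion `ℝ^m × ℝ → ℝ^{m+1}` (Euclidean, i.e. `ℓ²`, product). -/
noncomputable def embGraph (m : ℕ) (y : EuclideanSpace ℝ (Fin m)) (t : ℝ) :
    WithLp 2 (EuclideanSpace ℝ (Fin m) × ℝ) :=
  (WithLp.equiv 2 (EuclideanSpace ℝ (Fin m) × ℝ)).symm (y, t)

/-- First (horizontal) component of a point of `ℝ^m ×₂ ℝ`. -/
noncomputable def projH (m : ℕ) (z : WithLp 2 (EuclideanSpace ℝ (Fin m) × ℝ)) :
    EuclideanSpace ℝ (Fin m) :=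
  ((WithLp.equiv 2 (EuclideanSpace ℝ (Fin m) × ℝ)) z).1

/-- Last (vertical) component of a point of `ℝ^m ×₂ ℝ`. -/
noncomputable def projV (m : ℕ) (z : WithLp 2 (EuclideanSpace ℝ (Fin m) × ℝ)) : ℝ :=
  ((WithLp.equiv 2 (EuclideanSpace ℝ (Fin m) × ℝ)) z).2

open Filter Topology MeasureTheory Set Metric

private lemma sum_extend_eq {ι κ β : Type*} [Fintype ι] [Fintype κ] [AddCommMonoid β]
    (f : ι ↪ κ) (g : ι → β) : ∑ j, Function.extend f g 0 j = ∑ i, g i := by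
  classical
  rw [← Finset.sum_sdiff (Finset.subset_univ (Finset.univ.map f))]
  have h1 : ∀ j ∈ Finset.univ \ Finset.univ.map f, Function.extend f g 0 j = 0 := by
    intro j hj
    have hj' : ¬∃ i, f i = j := by simpa using hj
    rw [Function.extend_apply' _ _ _ hj']
    rfl
  rw [Finset.sum_congr rfl h1, Finset.sum_const_zero, zero_add, Finset.sum_map]
  exact Finset.sum_congr rfl fun i _ => f.injective.extend_apply g 0 i

theorem my_isCompact_convexHull {E : Type*} [NormedAddCommGroup E] [NormedSpace ℝ E]
    [FiniteDimensional ℝ E] {s : Set E} (hs : IsCompact s) :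
    IsCompact (convexHull ℝ s) := by
  classical
  rcases s.eq_empty_or_nonempty with rfl | ⟨s₀, hs₀⟩
  · simp
  set n := Module.finrank ℝ E with hn
  let T : (Fin (n+1) → ℝ) × (Fin (n+1) → E) → E := fun p => ∑ i, p.1 i • p.2 i
  have hT : Continuous T := by
    apply continuous_finset_sum
    intro i _
    exact ((continuous_apply i).comp continuous_fst).smul
      ((continuous_apply i).comp continuous_snd)
  have hA : IsCompact ((stdSimplex ℝ (Fin (n+1))) ×ˢ (univ.pi fun _ : Fin (n+1) => s)) :=
    (isCompact_stdSimplex _ _).prod (isCompact_univ_pi fun _ => hs)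
  have himage : convexHull ℝ s =
      T '' ((stdSimplex ℝ (Fin (n+1))) ×ˢ (univ.pi fun _ : Fin (n+1) => s)) := by
    apply Subset.antisymm
    · intro x hx
      obtain ⟨ι, hι, z, w, hzs, hai, hw, hw1, hx⟩ := eq_pos_convex_span_of_mem_convexHull hx
      have hcard : Fintype.card ι ≤ n + 1 :=
        hai.card_le_finrank_succ.trans (Nat.add_le_add_right (Submodule.finrank_le _) 1)
      let f : ι ↪ Fin (n+1) :=
        (Fintype.equivFin ι).toEmbedding.trans (Fin.castLEEmb (by simpa using hcard))
      set w' : Fin (n+1) → ℝ := Function.extend f w 0 with hw'def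
      set z' : Fin (n+1) → E := Function.extend f z (fun _ => s₀) with hz'def
      refine ⟨(w', z'), ⟨⟨?_, ?_⟩, ?_⟩, ?_⟩
      · intro j
        show 0 ≤ w' j
        by_cases h : ∃ i, f i = j
        · obtain ⟨i, rfl⟩ := h
          rw [hw'def, f.injective.extend_apply]
          exact (hw i).le
        · rw [hw'def, Function.extend_apply' _ _ _ h]
          exact le_refl _
      · show ∑ j, w' j = 1
        rw [hw'def, sum_extend_eq f w, hw1]
      · intro j _
        show z' j ∈ s
        by_cases h : ∃ i, f i = j
        · obtain ⟨i, rfl⟩ := h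
          rw [hz'def, f.injective.extend_apply]
          exact hzs ⟨i, rfl⟩
        · rw [hz'def, Function.extend_apply' _ _ _ h]
          exact hs₀
      · show ∑ j, w' j • z' j = x
        rw [← hx]
        have : ∀ j, w' j • z' j = Function.extend f (fun i => w i • z i) 0 j := by
          intro j
          by_cases h : ∃ i, f i = j
          · obtain ⟨i, rfl⟩ := h
            rw [hw'def, hz'def, f.injective.extend_apply, f.injective.extend_apply,
              f.injective.extend_apply]
          · rw [hw'def, Function.extend_apply' _ _ _ h, Function.extend_apply' _ _ _ h]
            simp
        rw [Finset.sum_congr rfl fun j _ => this j, sum_extend_eq f _]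
    · rintro _ ⟨⟨w, z⟩, ⟨⟨hw, hw1⟩, hz⟩, rfl⟩
      exact (convex_convexHull ℝ s).sum_mem (fun i _ => hw i) hw1
        (fun i _ => subset_convexHull ℝ s (hz i (mem_univ i)))
  rw [himage]
  exact hA.image hT

variable {m : ℕ}
local notation "E" => EuclideanSpace ℝ (Fin m)
local notation "Z" => WithLp 2 (EuclideanSpace ℝ (Fin m) × ℝ)

lemma projH_embGraph (y : E) (t : ℝ) : projH m (embGraph m y t) = y := rfl
lemma projV_embGraph (y : E) (t : ℝ) : projV m (embGraph m y t) = t := rfl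
lemma embGraph_eta (z : Z) : embGraph m (projH m z) (projV m z) = z := rfl
lemma embGraph_sub (y y' : E) (t t' : ℝ) :
    embGraph m y t - embGraph m y' t' = embGraph m (y - y') (t - t') := rfl
lemma embGraph_smul (c : ℝ) (y : E) (t : ℝ) :
    c • embGraph m y t = embGraph m (c • y) (c * t) := rfl
lemma norm_embGraph_sq (y : E) (t : ℝ) : ‖embGraph m y t‖ ^ 2 = ‖y‖ ^ 2 + t ^ 2 := by
  rw [WithLp.prod_norm_sq_eq_of_L2]
  have h1 : (embGraph m y t).fst = y := rfl
  have h2 : (embGraph m y t).snd = t := rfl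
  rw [h1, h2, Real.norm_eq_abs, sq_abs]
lemma embGraph_add (y y' : E) (t t' : ℝ) :
    embGraph m y t + embGraph m y' t' = embGraph m (y + y') (t + t') := rfl
lemma embGraph_zero : (embGraph m 0 0 : Z) = 0 := rfl
lemma embGraph_sum {ι : Type*} (s : Finset ι) (a : ι → E) (b : ι → ℝ) :
    ∑ i ∈ s, embGraph m (a i) (b i) = embGraph m (∑ i ∈ s, a i) (∑ i ∈ s, b i) := by
  classical
  induction s using Finset.induction_on with
  | empty => simpa using embGraph_zero.symm
  | insert _ _ h ih =>
      rw [Finset.sum_insert h, Finset.sum_insert h, Finset.sum_insert h, ih, embGraph_add]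

lemma continuous_embGraph : Continuous fun q : E × ℝ => embGraph m q.1 q.2 := by
  have : (fun q : E × ℝ => embGraph m q.1 q.2) =
      fun q => (WithLp.prodContinuousLinearEquiv 2 ℝ E ℝ).symm q := rfl
  rw [this]
  exact (WithLp.prodContinuousLinearEquiv 2 ℝ E ℝ).symm.continuous

lemma dist_embGraph_sq (x : Z) (y : E) (t : ℝ) :
    dist x (embGraph m y t) ^ 2 = ‖projH m x - y‖ ^ 2 + (projV m x - t) ^ 2 := by
  rw [dist_eq_norm]
  have h1 : x - embGraph m y t = embGraph m (projH m x - y) (projV m x - t) := rfl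
  rw [h1, norm_embGraph_sq]

lemma continuous_normalmap : Continuous fun q : E =>
    (Real.sqrt (‖q‖ ^ 2 + 1))⁻¹ • embGraph m (-q) (1:ℝ) := by
  apply Continuous.fun_smul
  · apply Continuous.inv₀
    · exact (continuous_norm.pow 2).add continuous_const |>.sqrt
    · intro q
      positivity
  · exact continuous_embGraph.comp (continuous_neg.prodMk continuous_const)

lemma norm_gradient_eq (f : E → ℝ) (x : E) : ‖gradient f x‖ = ‖fderiv ℝ f x‖ :=
  (InnerProductSpace.toDual ℝ _).symm.norm_map _

lemma gradient_congr {f g : E → ℝ} {x : E} (h : f =ᶠ[𝓝 x] g) :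
    gradient f x = gradient g x := by
  unfold gradient
  rw [h.fderiv_eq]

lemma exists_diff_point (g : E → ℝ) {L : NNReal} (hg : LipschitzWith L g) (a : E) {ε : ℝ}
    (hε : 0 < ε) : ∃ y ∈ Metric.ball a ε, DifferentiableAt ℝ g y := by
  by_contra h
  push_neg at h
  have h1 : Metric.ball a ε ⊆ {y | ¬DifferentiableAt ℝ g y} := fun y hy => h y hy
  have h2 : volume {y : E | ¬DifferentiableAt ℝ g y} = 0 := by
    have := hg.ae_differentiableAt (μ := volume)
    rwa [ae_iff] at this
  have h3 := measure_mono (μ := volume) h1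
  rw [h2] at h3
  exact absurd (le_antisymm h3 zero_le) (measure_ball_pos volume a hε).ne'

lemma lip_integrableOn (g : E → ℝ) {L : NNReal} (hg : LipschitzWith L g)
    (c : E) (B : Set E) (hB : IsCompact B) :
    IntegrableOn (fun z : E => g (z - c)) B volume :=
  ((hg.continuous.comp (continuous_id.sub continuous_const)).continuousOn).integrableOn_compact hB

lemma fderiv_apply_bound (g : E → ℝ) {L : NNReal} (hg : LipschitzWith L g) (z d : E) :
    |fderiv ℝ g z d| ≤ L * ‖d‖ := by
  calc |fderiv ℝ g z d| ≤ ‖fderiv ℝ g z‖ * ‖d‖ := (fderiv ℝ g z).le_opNorm d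
  _ ≤ L * ‖d‖ := by
      gcongr
      exact norm_fderiv_le_of_lipschitz ℝ hg

lemma fderiv_transl_integrable (g : E → ℝ) {L : NNReal} (hg : LipschitzWith L g)
    (c d : E) (B : Set E) (hB : MeasurableSet B) (hBfin : volume B < ⊤) :
    IntegrableOn (fun z : E => fderiv ℝ g (z - c) d) B volume := by
  have hmeas : Measurable fun z : E => fderiv ℝ g (z - c) d := by
    have h1 : Measurable fun y : E => fderiv ℝ g y d := measurable_fderiv_apply_const ℝ g d
    have h2 : Measurable fun z : E => z - c := measurable_id.sub measurable_const
    exact h1.comp h2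
  refine Integrable.mono' ((integrableOn_const_iff (C := (L : ℝ) * ‖d‖)).mpr (Or.inr hBfin))
    hmeas.aestronglyMeasurable.restrict (Filter.Eventually.of_forall fun z => ?_)
  simpa using fderiv_apply_bound g hg (z - c) d

lemma hasDerivAt_I (g : E → ℝ) {L : NNReal} (hg : LipschitzWith L g) (d : E)
    (B : Set E) (hB : IsCompact B) (hBm : MeasurableSet B) (s : ℝ) :
    HasDerivAt (fun s : ℝ => ∫ z in B, g (z - s • d))
      (-∫ z in B, fderiv ℝ g (z - s • d) d) s := by
  rw [hasDerivAt_iff_tendsto_slope]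
  have hae : ∀ᵐ z : E, DifferentiableAt ℝ g (z - s • d) :=
    (measurePreserving_sub_right volume (s • d)).quasiMeasurePreserving.ae
      hg.ae_differentiableAt
  have key : Tendsto (fun v : ℝ => ∫ z in B, (g (z - v • d) - g (z - s • d)) / (v - s))
      (𝓝[≠] s) (𝓝 (∫ z in B, -(fderiv ℝ g (z - s • d) d))) := by
    apply tendsto_integral_filter_of_dominated_convergence (fun _ : E => (L : ℝ) * ‖d‖)
    · apply Filter.Eventually.of_forall
      intro v
      apply Continuous.aestronglyMeasurable
      exact ((hg.continuous.comp (continuous_id.sub continuous_const)).sub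
        (hg.continuous.comp (continuous_id.sub continuous_const))).div_const _
    · filter_upwards [self_mem_nhdsWithin] with v hv
      apply Filter.Eventually.of_forall
      intro z
      have hv' : v ≠ s := hv
      have hdist : dist (z - v • d) (z - s • d) = |v - s| * ‖d‖ := by
        rw [dist_eq_norm]
        have h2 : z - v • d - (z - s • d) = (s - v) • d := by
          rw [sub_smul]; abel
        rw [h2, norm_smul]
        simp [abs_sub_comm]
      have hnum : |g (z - v • d) - g (z - s • d)| ≤ (L : ℝ) * (|v - s| * ‖d‖) := by
        rw [← hdist, ← Real.dist_eq]
        exact hg.dist_le_mul _ _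
      rw [Real.norm_eq_abs, abs_div,
        div_le_iff₀ (by simp [sub_eq_zero, hv'] : (0:ℝ) < |v - s|)]
      calc |g (z - v • d) - g (z - s • d)| ≤ (L : ℝ) * (|v - s| * ‖d‖) := hnum
      _ = (L : ℝ) * ‖d‖ * |v - s| := by ring
    · exact (integrableOn_const_iff).mpr (Or.inr hB.measure_lt_top)
    · apply ae_restrict_of_ae
      filter_upwards [hae] with z hz
      have inner : HasDerivAt (fun v : ℝ => z - v • d) (-d) s := by
        simpa using ((hasDerivAt_id s).smul_const d).const_sub z
      have comp : HasDerivAt (fun v : ℝ => g (z - v • d)) (fderiv ℝ g (z - s • d) (-d)) s :=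
        hz.hasFDerivAt.comp_hasDerivAt s inner
      have h3 := hasDerivAt_iff_tendsto_slope.mp comp
      rw [(fderiv ℝ g (z - s • d)).map_neg] at h3
      have h4 : slope (fun v : ℝ => g (z - v • d)) s =
          fun v => (g (z - v • d) - g (z - s • d)) / (v - s) := by
        funext v
        rw [slope_def_field]
      rwa [h4] at h3
  rw [integral_neg] at key
  have heq : ∀ᶠ v in 𝓝[≠] s,
      (fun v : ℝ => ∫ z in B, (g (z - v • d) - g (z - s • d)) / (v - s)) v =
      slope (fun s : ℝ => ∫ z in B, g (z - s • d)) s v := by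
    filter_upwards [self_mem_nhdsWithin] with v hv
    have hv' : (v : ℝ) ≠ s := hv
    rw [slope_def_field,
      ← integral_sub (lip_integrableOn g hg (v • d) B hB) (lip_integrableOn g hg (s • d) B hB),
      integral_div]
  exact (key.congr' heq)

lemma key_mvt (g : E → ℝ) {L : NNReal} (hg : LipschitzWith L g) (a d : E) {ρ u t : ℝ}
    (hub : ∀ z ∈ Metric.ball a ρ, DifferentiableAt ℝ g z → fderiv ℝ g z d ≤ u)
    (ht : 0 ≤ t) (hsmall : t * ‖d‖ < ρ) :
    g a - g (a - t • d) ≤ u * t := by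
  have hρ : 0 < ρ := lt_of_le_of_lt (by positivity) hsmall
  refine le_of_forall_pos_le_add fun ε hε => ?_
  set σ := min ((ρ - t * ‖d‖) / 2) (ε / (2 * L + 1)) with hσdef
  have hσpos : 0 < σ := lt_min (by linarith) (by positivity)
  have hσ1 : σ + t * ‖d‖ < ρ := by
    have h1 := min_le_left ((ρ - t * ‖d‖) / 2) (ε / (2 * L + 1))
    rw [← hσdef] at h1
    linarith
  have hσ2 : 2 * (L : ℝ) * σ ≤ ε := by
    have h1 := min_le_right ((ρ - t * ‖d‖) / 2) (ε / (2 * L + 1))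
    rw [← hσdef] at h1
    have h2 : σ * (2 * (L : ℝ) + 1) ≤ ε := by
      rw [← le_div_iff₀ (by positivity)]
      exact h1
    nlinarith [hσpos]
  set B := Metric.closedBall a σ with hBdef
  have hBc : IsCompact B := isCompact_closedBall a σ
  have hBm : MeasurableSet B := measurableSet_closedBall
  have hμfin : volume B < ⊤ := hBc.measure_lt_top
  have hμpos : 0 < (volume B).toReal :=
    ENNReal.toReal_pos (measure_closedBall_pos volume a hσpos).ne' hμfin.ne
  set μB := (volume B).toReal with hμBdef
  have hball : ∀ s ∈ Set.Icc (0:ℝ) t, ∀ z ∈ B, z - s • d ∈ Metric.ball a ρ := by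
    intro s hs z hz
    rw [mem_ball, dist_eq_norm]
    have h1 : z - s • d - a = (z - a) - s • d := by abel
    calc ‖z - s • d - a‖ = ‖(z - a) - s • d‖ := by rw [h1]
    _ ≤ ‖z - a‖ + ‖s • d‖ := norm_sub_le _ _
    _ ≤ σ + s * ‖d‖ := by
        gcongr
        · exact mem_closedBall_iff_norm.mp hz
        · rw [norm_smul, Real.norm_eq_abs, abs_of_nonneg hs.1]
    _ ≤ σ + t * ‖d‖ := by
        gcongr
        exact hs.2
    _ < ρ := hσ1
  set I : ℝ → ℝ := fun s => ∫ z in B, g (z - s • d) with hIdef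
  have hIderiv : ∀ s : ℝ, HasDerivAt I (-∫ z in B, fderiv ℝ g (z - s • d) d) s :=
    fun s => hasDerivAt_I g hg d B hBc hBm s
  set K : ℝ → ℝ := fun s => I s + (u * μB) * s with hKdef
  have hKderiv : ∀ s : ℝ,
      HasDerivAt K ((-∫ z in B, fderiv ℝ g (z - s • d) d) + u * μB) s := by
    intro s
    have h2 : HasDerivAt (fun s : ℝ => (u * μB) * s) (u * μB) s := by
      simpa using (hasDerivAt_id s).const_mul (u * μB)
    exact (hIderiv s).add h2
  have hd_nonneg : ∀ s ∈ Set.Icc (0:ℝ) t,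
      0 ≤ (-∫ z in B, fderiv ℝ g (z - s • d) d) + u * μB := by
    intro s hs
    have hae : ∀ᵐ z ∂(volume.restrict B), DifferentiableAt ℝ g (z - s • d) :=
      ae_restrict_of_ae ((measurePreserving_sub_right volume (s • d)).quasiMeasurePreserving.ae
        hg.ae_differentiableAt)
    have hmem : ∀ᵐ z ∂(volume.restrict B), z ∈ B := ae_restrict_mem hBm
    have hle : (∫ z in B, fderiv ℝ g (z - s • d) d) ≤ ∫ _ in B, u := by
      apply integral_mono_ae (fderiv_transl_integrable g hg (s • d) d B hBm hμfin)
        ((integrableOn_const_iff (C := u)).mpr (Or.inr hμfin))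
      filter_upwards [hae, hmem] with z hz hzB
      exact hub _ (hball s hs z hzB) hz
    have hconst : (∫ _ in B, u) = u * μB := by
      rw [setIntegral_const, smul_eq_mul, mul_comm]
      rfl
    linarith [hle, hconst ▸ hle]
  have hmono : MonotoneOn K (Set.Icc (0:ℝ) t) := by
    apply monotoneOn_of_deriv_nonneg (convex_Icc 0 t)
    · exact fun s _ => (hKderiv s).continuousAt.continuousWithinAt
    · exact fun s _ => (hKderiv s).differentiableAt.differentiableWithinAt
    · intro s hs
      rw [interior_Icc] at hs
      rw [(hKderiv s).deriv]
      exact hd_nonneg s ⟨hs.1.le, hs.2.le⟩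
  have hK0t : K 0 ≤ K t :=
    hmono ⟨le_refl 0, ht⟩ ⟨ht, le_refl t⟩ ht
  have hI0t : I 0 - I t ≤ u * μB * t := by
    have : K 0 = I 0 := by simp [hKdef]
    have h2 : K t = I t + u * μB * t := rfl
    linarith [hK0t, this ▸ hK0t]
  -- pointwise lower bound
  have hIsub : I 0 - I t = ∫ z in B, (g (z - (0:ℝ) • d) - g (z - t • d)) := by
    rw [hIdef]
    exact (integral_sub (lip_integrableOn g hg ((0:ℝ) • d) B hBc)
      (lip_integrableOn g hg (t • d) B hBc)).symm
  have hptwise : ∀ z ∈ B, g a - g (a - t • d) - 2 * (L : ℝ) * σ ≤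
      g (z - (0:ℝ) • d) - g (z - t • d) := by
    intro z hz
    have hza : dist z a ≤ σ := mem_closedBall.mp hz
    have h1 : |g z - g a| ≤ (L : ℝ) * σ := by
      calc |g z - g a| ≤ (L : ℝ) * dist z a := by
            rw [← Real.dist_eq]; exact hg.dist_le_mul _ _
      _ ≤ (L : ℝ) * σ := by gcongr
    have h2 : |g (z - t • d) - g (a - t • d)| ≤ (L : ℝ) * σ := by
      calc |g (z - t • d) - g (a - t • d)| ≤ (L : ℝ) * dist (z - t • d) (a - t • d) := by
            rw [← Real.dist_eq]; exact hg.dist_le_mul _ _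
      _ ≤ (L : ℝ) * σ := by
            gcongr
            rw [dist_eq_norm]
            have : z - t • d - (a - t • d) = z - a := by abel
            rw [this, ← dist_eq_norm]
            exact hza
    have h1' := abs_le.mp h1
    have h2' := abs_le.mp h2
    simp only [zero_smul, sub_zero]
    linarith [h1'.1, h1'.2, h2'.1, h2'.2]
  have hlow : (g a - g (a - t • d) - 2 * (L : ℝ) * σ) * μB ≤ I 0 - I t := by
    rw [hIsub]
    have := setIntegral_mono_on
      ((integrableOn_const_iff (C := g a - g (a - t • d) - 2 * (L : ℝ) * σ)).mpr (Or.inr hμfin))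
      ((lip_integrableOn g hg ((0:ℝ) • d) B hBc).sub (lip_integrableOn g hg (t • d) B hBc))
      hBm hptwise
    rwa [setIntegral_const, smul_eq_mul, mul_comm (volume.real B) _] at this
  have hfinal : g a - g (a - t • d) - 2 * (L : ℝ) * σ ≤ u * t := by
    have h := hlow.trans hI0t
    have h2 : u * μB * t = (u * t) * μB := by ring
    rw [h2] at h
    exact le_of_mul_le_mul_right h hμpos
  linarith


set_option maxHeartbeats 1000000 in
/-- Characterization of minimizers for Lipschitz domains: let `D` be closed, `x ∉ D`
with unique metric projection `p = P_D(x)`, and suppose that near `p` (after a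
rotation) `∂D` is the graph of a Lipschitz function `φ` with `D` locally the subgraph
`{(y, y_d) : y_d ≤ φ(y)}`, `p = (y*, φ(y*))`.  Then the first-order optimality
condition `0 ∈ ∂Φ(y*)` for `Φ(y) = ½|(y, φ(y)) − x|²` yields
`x − p = Σ_{j} α_j lim_i n_D(y_i^{(j)}, φ(y_i^{(j)}))` with `α_j ≥ 0` and sequences
`y_i^{(j)} → y*` at which `φ` is differentiable and the unit normals
`n_D(y, φ(y)) = (−∇φ(y), 1)/√(|∇φ(y)|² + 1)` converge. -/

theorem projection_direction_is_combination_of_limiting_normals (m : ℕ)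
    (D : Set (WithLp 2 (EuclideanSpace ℝ (Fin m) × ℝ))) (hDclosed : IsClosed D)
    (x p : WithLp 2 (EuclideanSpace ℝ (Fin m) × ℝ)) (hx : x ∉ D) (hp : p ∈ D)
    (hmin : ∀ q ∈ D, dist x p ≤ dist x q)
    (huniq : ∀ q ∈ D, dist x q = dist x p → q = p)
    (V : Set (EuclideanSpace ℝ (Fin m))) (hVopen : IsOpen V)
    (ystar : EuclideanSpace ℝ (Fin m)) (hyV : ystar ∈ V)
    (φ : EuclideanSpace ℝ (Fin m) → ℝ) (L : NNReal) (hφ : LipschitzOnWith L φ V)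
    (hpeq : p = embGraph m ystar (φ ystar))
    (U : Set (WithLp 2 (EuclideanSpace ℝ (Fin m) × ℝ))) (hU : U ∈ nhds p)
    (hgraph : D ∩ U = {z ∈ U | projV m z ≤ φ (projH m z) ∧ projH m z ∈ V}) :
    ∃ k : ℕ, 1 ≤ k ∧
      ∃ (α : Fin k → ℝ) (ν : Fin k → WithLp 2 (EuclideanSpace ℝ (Fin m) × ℝ))
        (y : Fin k → ℕ → EuclideanSpace ℝ (Fin m)),
        (∀ j, 0 ≤ α j) ∧
        (∀ j, Tendsto (y j) atTop (nhds ystar)) ∧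
        (∀ j i, y j i ∈ V ∧ DifferentiableAt ℝ φ (y j i)) ∧
        (∀ j, Tendsto
          (fun i => (Real.sqrt (‖gradient φ (y j i)‖ ^ 2 + 1))⁻¹ •
            embGraph m (-(gradient φ (y j i))) 1) atTop (nhds (ν j))) ∧
        x - p = ∑ j, α j • ν j := by
  classical
  obtain ⟨g, hgLip, hgeq⟩ := hφ.extend_real
  set xt := projH m x with hxtdef
  set xd := projV m x with hxddef
  set c := xd - φ ystar with hcdef
  obtain ⟨r, hrpos, hrV, hrD⟩ : ∃ r > 0, Metric.ball ystar r ⊆ V ∧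
      ∀ y ∈ Metric.ball ystar r, embGraph m y (φ y) ∈ D := by
    have hFcont : Continuous fun y : EuclideanSpace ℝ (Fin m) => embGraph m y (g y) :=
      continuous_embGraph.comp (continuous_id.prodMk hgLip.continuous)
    have hFp : embGraph m ystar (g ystar) = p := by
      rw [hpeq, hgeq hyV]
    have hFU : (fun y : EuclideanSpace ℝ (Fin m) => embGraph m y (g y)) ⁻¹' U ∈ 𝓝 ystar :=
      hFcont.continuousAt.preimage_mem_nhds (by rw [hFp]; exact hU)
    obtain ⟨r, hrpos, hball⟩ := Metric.mem_nhds_iff.mp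
      (Filter.inter_mem (hVopen.mem_nhds hyV) hFU)
    refine ⟨r, hrpos, fun y hy => (hball hy).1, fun y hy => ?_⟩
    have hyV' : y ∈ V := (hball hy).1
    have hyU : embGraph m y (g y) ∈ U := (hball hy).2
    rw [← hgeq hyV'] at hyU
    have hmem : embGraph m y (φ y) ∈ D ∩ U := by
      rw [hgraph]
      exact ⟨hyU, by rw [projV_embGraph, projH_embGraph]; exact ⟨le_refl _, hyV'⟩⟩
    exact hmem.1
  have hloc : ∀ y ∈ Metric.ball ystar r, φ =ᶠ[𝓝 y] g := by
    intro y hy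
    exact Filter.eventuallyEq_of_mem (hVopen.mem_nhds (hrV hy)) hgeq
  obtain ⟨t₀, ht₀pos, ht₀D⟩ : ∃ t₀ > 0, ∀ t ∈ Set.Ico (0:ℝ) t₀,
      embGraph m ystar (φ ystar - t) ∈ D := by
    have hFcont : Continuous fun t : ℝ => embGraph m ystar (φ ystar - t) :=
      continuous_embGraph.comp (continuous_const.prodMk (continuous_const.sub continuous_id))
    have hFp : embGraph m ystar (φ ystar - 0) = p := by rw [hpeq, sub_zero]
    have hFU : (fun t : ℝ => embGraph m ystar (φ ystar - t)) ⁻¹' U ∈ 𝓝 (0:ℝ) :=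
      hFcont.continuousAt.preimage_mem_nhds (by rw [hFp]; exact hU)
    obtain ⟨t₀, ht₀pos, hball⟩ := Metric.mem_nhds_iff.mp hFU
    refine ⟨t₀, ht₀pos, fun t ht => ?_⟩
    have htU : embGraph m ystar (φ ystar - t) ∈ U := by
      apply hball
      rw [Metric.mem_ball, Real.dist_eq, sub_zero, abs_of_nonneg ht.1]
      exact ht.2
    have hmem : embGraph m ystar (φ ystar - t) ∈ D ∩ U := by
      rw [hgraph]
      refine ⟨htU, by rw [projV_embGraph, projH_embGraph]; exact ⟨by linarith [ht.1], hyV⟩⟩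
    exact hmem.1
  have hxeq : x = embGraph m xt xd := rfl
  have hdsq : ∀ (q : WithLp 2 (EuclideanSpace ℝ (Fin m) × ℝ)), q ∈ D →
      ‖xt - ystar‖^2 + c^2 ≤ dist x q ^ 2 := by
    intro q hq
    have h1 : dist x p ≤ dist x q := hmin q hq
    have h2 : dist x p ^ 2 = ‖xt - ystar‖^2 + c^2 := by
      rw [hpeq, dist_embGraph_sq]
    rw [← h2]
    exact pow_le_pow_left₀ dist_nonneg h1 2
  have hΦ : ∀ y ∈ Metric.ball ystar r,
      ‖xt - ystar‖^2 + c^2 ≤ ‖xt - y‖^2 + (xd - φ y)^2 := by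
    intro y hy
    have := hdsq _ (hrD y hy)
    rwa [dist_embGraph_sq] at this
  have hxnep : x ≠ p := fun h => hx (h ▸ hp)
  have hcge : 0 ≤ c := by
    by_contra hneg
    push_neg at hneg
    set t := min (t₀ / 2) (-c) with htdef
    have htpos : 0 < t := lt_min (by linarith) (by linarith)
    have ht1 : t < t₀ := lt_of_le_of_lt (min_le_left _ _) (by linarith)
    have ht2 : t ≤ -c := min_le_right _ _
    have hq := hdsq _ (ht₀D t ⟨htpos.le, ht1⟩)
    rw [dist_embGraph_sq] at hq
    have h3 : projV m x - (φ ystar - t) = c + t := by rw [hcdef]; ring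
    rw [h3] at hq
    nlinarith [hq, htpos, ht2, hneg]
  have hcne : c ≠ 0 := by
    intro hc0
    have hvne : xt - ystar ≠ 0 := by
      intro hv0
      apply hxnep
      have h1 : xt = ystar := by rwa [sub_eq_zero] at hv0
      have h2 : xd = φ ystar := by rw [hcdef] at hc0; linarith
      rw [hxeq, h1, h2, hpeq]
    set v := xt - ystar with hvdef
    have hvpos : 0 < ‖v‖ := norm_pos_iff.mpr hvne
    set s := min (r / (2 * ‖v‖)) (1 / (1 + (L:ℝ)^2)) with hsdef
    have hspos : 0 < s := lt_min (by positivity) (by positivity)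
    have hs1 : s * ‖v‖ < r := by
      have h1 : s ≤ r / (2 * ‖v‖) := min_le_left _ _
      have h3 : r / (2 * ‖v‖) * ‖v‖ = r / 2 := by
        field_simp
      have h2 : s * ‖v‖ ≤ r / 2 := by
        calc s * ‖v‖ ≤ r / (2 * ‖v‖) * ‖v‖ := by gcongr
        _ = r / 2 := h3
      linarith
    have hs2 : s * (1 + (L:ℝ)^2) ≤ 1 := by
      have h1 : s ≤ 1 / (1 + (L:ℝ)^2) := min_le_right _ _
      rw [le_div_iff₀ (by positivity)] at h1
      linarith
    set y := ystar + s • v with hydef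
    have hymem : y ∈ Metric.ball ystar r := by
      rw [Metric.mem_ball, dist_eq_norm, hydef]
      have : ystar + s • v - ystar = s • v := by abel
      rw [this, norm_smul, Real.norm_eq_abs, abs_of_pos hspos]
      exact hs1
    have hΦy := hΦ y hymem
    have hxy : xt - y = (1 - s) • v := by
      rw [hydef, hvdef, sub_smul, one_smul]
      abel
    have hφy : |φ ystar - φ y| ≤ (L:ℝ) * (s * ‖v‖) := by
      have := hφ.dist_le_mul ystar hyV y (hrV hymem)
      rw [Real.dist_eq] at this
      calc |φ ystar - φ y| ≤ (L:ℝ) * dist ystar y := this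
      _ = (L:ℝ) * (s * ‖v‖) := by
          rw [dist_eq_norm, hydef]
          have h5 : ystar - (ystar + s • v) = -(s • v) := by abel
          rw [h5, norm_neg, norm_smul, Real.norm_eq_abs, abs_of_pos hspos]
    have hxd : xd - φ y = φ ystar - φ y := by rw [hcdef] at hc0; linarith [hc0]
    rw [hxy, hxd] at hΦy
    have h6 : ‖(1 - s) • v‖^2 = (1-s)^2 * ‖v‖^2 := by
      rw [norm_smul, mul_pow, Real.norm_eq_abs, sq_abs]
    rw [h6, hc0] at hΦy
    have h7 := abs_le.mp hφy
    have h8 : (φ ystar - φ y)^2 ≤ ((L:ℝ) * (s * ‖v‖))^2 := sq_le_sq' h7.1 h7.2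
    have h9 : s * (s * (1 + (L:ℝ)^2)) ≤ s * 1 := mul_le_mul_of_nonneg_left hs2 hspos.le
    have h10 : 0 < ‖v‖^2 := by positivity
    nlinarith [hΦy, h8, h9, h10, hspos, mul_pos hspos h10]
  have hcpos : 0 < c := lt_of_le_of_ne hcge (Ne.symm hcne)
  set w := c⁻¹ • (xt - ystar) with hwdef
  have hcw : c • w = xt - ystar := by
    rw [hwdef, smul_smul, mul_inv_cancel₀ hcpos.ne', one_smul]
  set G : Set (EuclideanSpace ℝ (Fin m)) := {q | ∃ ys : ℕ → EuclideanSpace ℝ (Fin m),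
    (∀ i, ys i ∈ Metric.ball ystar r ∧ DifferentiableAt ℝ φ (ys i)) ∧
    Tendsto ys atTop (𝓝 ystar) ∧ Tendsto (fun i => gradient φ (ys i)) atTop (𝓝 q)} with hGdef
  have hgradbd : ∀ y ∈ Metric.ball ystar r, ‖gradient φ y‖ ≤ L := by
    intro y hy
    rw [gradient_congr (hloc y hy), norm_gradient_eq]
    exact norm_fderiv_le_of_lipschitz ℝ hgLip
  have hGbound : G ⊆ Metric.closedBall 0 (L : ℝ) := by
    rintro q ⟨ys, hys, -, hgrad⟩
    rw [Metric.mem_closedBall]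
    have hlim : Tendsto (fun i => ‖gradient φ (ys i)‖) atTop (𝓝 ‖q‖) := hgrad.norm
    rw [dist_zero_right]
    exact le_of_tendsto hlim (Filter.Eventually.of_forall fun i => hgradbd _ (hys i).1)
  have hGclosed : IsClosed G := by
    apply IsSeqClosed.isClosed
    intro qs q hqs hq
    have hchoice : ∀ k : ℕ, ∃ yk : EuclideanSpace ℝ (Fin m),
        (yk ∈ Metric.ball ystar r ∧ DifferentiableAt ℝ φ yk) ∧
        dist yk ystar < 1/(k+1) ∧ dist (gradient φ yk) (qs k) < 1/(k+1) := by
      intro k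
      obtain ⟨ys, h1, h2, h3⟩ := hqs k
      have hpos : (0:ℝ) < 1/(k+1) := by positivity
      have e1 : ∀ᶠ i in atTop, dist (ys i) ystar < 1/(k+1) :=
        h2 (Metric.ball_mem_nhds ystar hpos)
      have e2 : ∀ᶠ i in atTop, dist (gradient φ (ys i)) (qs k) < 1/(k+1) :=
        h3 (Metric.ball_mem_nhds (qs k) hpos)
      obtain ⟨i, hi1, hi2⟩ := (e1.and e2).exists
      exact ⟨ys i, h1 i, hi1, hi2⟩
    choose Y hY1 hY2 hY3 using hchoice
    have hone : Tendsto (fun k : ℕ => 1/((k:ℝ)+1)) atTop (𝓝 0) :=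
      tendsto_one_div_add_atTop_nhds_zero_nat
    refine ⟨Y, hY1, ?_, ?_⟩
    · rw [tendsto_iff_dist_tendsto_zero]
      exact squeeze_zero (fun k => dist_nonneg) (fun k => (hY2 k).le) hone
    · rw [tendsto_iff_dist_tendsto_zero]
      have hb : ∀ k : ℕ, dist (gradient φ (Y k)) q ≤ 1/((k:ℝ)+1) + dist (qs k) q :=
        fun k => (dist_triangle _ (qs k) q).trans (add_le_add (hY3 k).le (le_refl _))
      apply squeeze_zero (fun k => dist_nonneg) hb
      have h4 : Tendsto (fun k => dist (qs k) q) atTop (𝓝 0) :=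
        tendsto_iff_dist_tendsto_zero.mp hq
      simpa using hone.add h4
  have hGcompact : IsCompact G := by
    refine Metric.isCompact_of_isClosed_isBounded hGclosed ?_
    exact (Metric.isBounded_closedBall (x := (0 : EuclideanSpace ℝ (Fin m)))
      (r := (L:ℝ))).subset hGbound
  have hGnonempty : G.Nonempty := by
    have hchoice : ∀ k : ℕ, ∃ yk : EuclideanSpace ℝ (Fin m),
        (yk ∈ Metric.ball ystar r ∧ DifferentiableAt ℝ φ yk) ∧ dist yk ystar < 1/(k+1) := by
      intro k
      have hpos : (0:ℝ) < min r (1/(k+1)) := lt_min hrpos (by positivity)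
      obtain ⟨y, hy, hydiff⟩ := exists_diff_point g hgLip ystar hpos
      have hyr : y ∈ Metric.ball ystar r :=
        Metric.ball_subset_ball (min_le_left _ _) hy
      have hydiffφ : DifferentiableAt ℝ φ y :=
        hydiff.congr_of_eventuallyEq (hloc y hyr)
      refine ⟨y, ⟨hyr, hydiffφ⟩, ?_⟩
      have := Metric.mem_ball.mp hy
      exact lt_of_lt_of_le this (min_le_right _ _)
    choose Y hY1 hY2 using hchoice
    have hYlim : Tendsto Y atTop (𝓝 ystar) := by
      rw [tendsto_iff_dist_tendsto_zero]
      exact squeeze_zero (fun k => dist_nonneg) (fun k => (hY2 k).le)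
        tendsto_one_div_add_atTop_nhds_zero_nat
    have hmemcb : ∀ k, gradient φ (Y k) ∈ Metric.closedBall (0 : EuclideanSpace ℝ (Fin m)) L := by
      intro k
      rw [Metric.mem_closedBall, dist_zero_right]
      exact hgradbd _ (hY1 k).1
    obtain ⟨q, hqcb, σ, hσmono, hσlim⟩ :=
      (isCompact_closedBall (0 : EuclideanSpace ℝ (Fin m)) (L:ℝ)).tendsto_subseq hmemcb
    exact ⟨q, fun i => Y (σ i), fun i => hY1 (σ i), hYlim.comp hσmono.tendsto_atTop, hσlim⟩
  have hgradeq : ∀ y ∈ Metric.ball ystar r, gradient φ y = gradient g y :=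
    fun y hy => gradient_congr (hloc y hy)
  have hwmem : -w ∈ convexHull ℝ G := by
    by_contra hnot
    obtain ⟨f, u, hfb, hfw⟩ := geometric_hahn_banach_closed_point
      (convex_convexHull ℝ G) (my_isCompact_convexHull hGcompact).isClosed hnot
    set e := (InnerProductSpace.toDual ℝ (EuclideanSpace ℝ (Fin m))).symm f with hedef
    have hfe : ∀ v : EuclideanSpace ℝ (Fin m), f v = inner ℝ e v :=
      fun v => (InnerProductSpace.toDual_symm_apply).symm
    obtain ⟨q₀, hq₀⟩ := hGnonempty
    have hene : e ≠ 0 := by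
      intro h0
      have h1 : f q₀ = 0 := by rw [hfe, h0, inner_zero_left]
      have h2 : f (-w) = 0 := by rw [hfe, h0, inner_zero_left]
      have h3 := hfb q₀ (subset_convexHull ℝ G hq₀)
      rw [h1] at h3
      rw [h2] at hfw
      linarith
    have henorm : 0 < ‖e‖ := norm_pos_iff.mpr hene
    have hub : ∃ ρ > 0, ρ ≤ r ∧ ∀ z ∈ Metric.ball ystar ρ,
        DifferentiableAt ℝ g z → f (gradient g z) ≤ u := by
      by_contra hcon
      push_neg at hcon
      have hsel : ∀ k : ℕ, ∃ z : EuclideanSpace ℝ (Fin m),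
          z ∈ Metric.ball ystar (min r (1/(k+1))) ∧ DifferentiableAt ℝ g z ∧
          u < f (gradient g z) := by
        intro k
        have hpos : 0 < min r (1/((k:ℝ)+1)) := lt_min hrpos (by positivity)
        obtain ⟨z, hz1, hz2, hz3⟩ := hcon _ hpos (min_le_left _ _)
        exact ⟨z, hz1, hz2, hz3⟩
      choose Zf hZ1 hZ2 hZ3 using hsel
      have hZr : ∀ k, Zf k ∈ Metric.ball ystar r :=
        fun k => Metric.ball_subset_ball (min_le_left _ _) (hZ1 k)
      have hZdiffφ : ∀ k, DifferentiableAt ℝ φ (Zf k) :=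
        fun k => (hZ2 k).congr_of_eventuallyEq (hloc _ (hZr k))
      have hZlim : Tendsto Zf atTop (𝓝 ystar) := by
        rw [tendsto_iff_dist_tendsto_zero]
        apply squeeze_zero (fun k => dist_nonneg)
          (fun k => ((Metric.mem_ball.mp (hZ1 k)).trans_le (min_le_right _ _)).le)
          tendsto_one_div_add_atTop_nhds_zero_nat
      have hmemcb : ∀ k, gradient φ (Zf k) ∈
          Metric.closedBall (0 : EuclideanSpace ℝ (Fin m)) L := by
        intro k
        rw [Metric.mem_closedBall, dist_zero_right]
        exact hgradbd _ (hZr k)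
      obtain ⟨q, hqcb, σ, hσmono, hσlim⟩ :=
        (isCompact_closedBall (0 : EuclideanSpace ℝ (Fin m)) (L:ℝ)).tendsto_subseq hmemcb
      have hqG : q ∈ G :=
        ⟨fun i => Zf (σ i), fun i => ⟨hZr (σ i), hZdiffφ (σ i)⟩,
          hZlim.comp hσmono.tendsto_atTop, hσlim⟩
      have hulef : u ≤ f q := by
        apply ge_of_tendsto ((f.continuous.tendsto q).comp hσlim)
        apply Filter.Eventually.of_forall
        intro i
        have := (hZ3 (σ i)).le
        rwa [← hgradeq _ (hZr (σ i))] at this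
      linarith [hfb q (subset_convexHull ℝ G hqG)]
    obtain ⟨ρ, hρpos, hρr, hub⟩ := hub
    have hub' : ∀ z ∈ Metric.ball ystar ρ, DifferentiableAt ℝ g z → fderiv ℝ g z e ≤ u := by
      intro z hz hdz
      have h1 : (inner ℝ (gradient g z) e : ℝ) = fderiv ℝ g z e :=
        InnerProductSpace.toDual_symm_apply
      rw [← h1, real_inner_comm, ← hfe]
      exact hub z hz hdz
    set M := f (-w) - u with hMdef
    have hMpos : 0 < M := by rw [hMdef]; linarith
    set t := min (min ρ r / (2 * ‖e‖)) (c * M / ((1 + (L:ℝ)^2) * ‖e‖^2 + 1)) with htdef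
    have htpos : 0 < t := by
      apply lt_min
      · have : 0 < min ρ r := lt_min hρpos hrpos
        positivity
      · positivity
    have hte : t * ‖e‖ ≤ min ρ r / 2 := by
      have h1 : t ≤ min ρ r / (2 * ‖e‖) := min_le_left _ _
      have h3 : min ρ r / (2 * ‖e‖) * ‖e‖ = min ρ r / 2 := by
        field_simp
      calc t * ‖e‖ ≤ min ρ r / (2 * ‖e‖) * ‖e‖ := by gcongr
      _ = min ρ r / 2 := h3
    have hminpos : 0 < min ρ r := lt_min hρpos hrpos
    have hteρ : t * ‖e‖ < ρ :=
      lt_of_le_of_lt hte (lt_of_lt_of_le (by linarith) (min_le_left ρ r))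
    have hter : t * ‖e‖ < r :=
      lt_of_le_of_lt hte (lt_of_lt_of_le (by linarith) (min_le_right ρ r))
    have ht2 : t * ((1 + (L:ℝ)^2) * ‖e‖^2 + 1) ≤ c * M := by
      have h1 : t ≤ c * M / ((1 + (L:ℝ)^2) * ‖e‖^2 + 1) := min_le_right _ _
      rw [le_div_iff₀ (by positivity)] at h1
      exact h1
    have hkey := key_mvt g hgLip ystar e hub' htpos.le hteρ
    set yy := ystar - t • e with hyydef
    have hyymem : yy ∈ Metric.ball ystar r := by
      rw [Metric.mem_ball, hyydef, dist_eq_norm]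
      have h1 : ystar - t • e - ystar = -(t • e) := by abel
      rw [h1, norm_neg, norm_smul, Real.norm_eq_abs, abs_of_pos htpos]
      exact hter
    have hyyV : yy ∈ V := hrV hyymem
    have hδ1 : φ ystar - φ yy ≤ u * t := by
      rw [hgeq hyV, hgeq hyyV]
      exact hkey
    have hδ2 : |φ yy - φ ystar| ≤ (L:ℝ) * (t * ‖e‖) := by
      have h1 := hφ.dist_le_mul yy hyyV ystar hyV
      rw [Real.dist_eq] at h1
      calc |φ yy - φ ystar| ≤ (L:ℝ) * dist yy ystar := h1
      _ ≤ (L:ℝ) * (t * ‖e‖) := by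
          gcongr
          rw [hyydef, dist_eq_norm]
          have h2 : ystar - t • e - ystar = -(t • e) := by abel
          rw [h2, norm_neg, norm_smul, Real.norm_eq_abs, abs_of_pos htpos]
    have hΦyy := hΦ yy hyymem
    have hxtyy : xt - yy = (xt - ystar) + t • e := by rw [hyydef]; abel
    rw [hxtyy, norm_add_sq_real] at hΦyy
    have hinner : (inner ℝ (xt - ystar) (t • e) : ℝ) = t * (c * (-(f (-w)))) := by
      rw [real_inner_smul_right, ← hcw, real_inner_comm, ← hfe]
      have h5 : f (c • w) = c * f w := by
        rw [ContinuousLinearMap.map_smul, smul_eq_mul]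
      have h4 : f (-w) = -(f w) := by rw [ContinuousLinearMap.map_neg]
      rw [h5, h4]
      ring
    rw [hinner] at hΦyy
    have hnte : ‖t • e‖^2 = t^2 * ‖e‖^2 := by
      rw [norm_smul, mul_pow, Real.norm_eq_abs, sq_abs]
    rw [hnte] at hΦyy
    have hxdyy : xd - φ yy = c - (φ yy - φ ystar) := by rw [hcdef]; ring
    rw [hxdyy] at hΦyy
    have h8 : (φ yy - φ ystar)^2 ≤ ((L:ℝ) * (t * ‖e‖))^2 := by
      have h7 := abs_le.mp hδ2
      exact sq_le_sq' h7.1 h7.2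
    have hM' : f (-w) = M + u := by rw [hMdef]; ring
    rw [hM'] at hΦyy
    nlinarith [hΦyy, h8, hδ1, ht2, htpos, hcpos, hMpos, sq_nonneg (t*‖e‖), mul_pos htpos hcpos,
      mul_pos (mul_pos htpos hcpos) hMpos]
  obtain ⟨ι, hι, zf, wf, hzG, -, hwpos, hwsum, hrepr⟩ :=
    eq_pos_convex_span_of_mem_convexHull hwmem
  haveI hFin : Fintype ι := hι
  have hieq : hFin = hι := Subsingleton.elim _ _
  haveI hιne : Nonempty ι := by
    by_contra hno
    rw [not_nonempty_iff] at hno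
    haveI := hno
    simp at hwsum
  have hwsum' : ∑ i : ι, wf i = 1 := by rw [hieq]; exact hwsum
  have hrepr' : ∑ i : ι, wf i • zf i = -w := by rw [hieq]; exact hrepr
  set k := Fintype.card ι with hkdef
  have hk1 : 1 ≤ k := Fintype.card_pos
  set en : Fin k ≃ ι := (Fintype.equivFin ι).symm with hendef
  have hsq : ∀ i : ι, 0 < Real.sqrt (‖zf i‖^2 + 1) :=
    fun i => Real.sqrt_pos.mpr (by positivity)
  choose ys hys1 hys2 hys3 using fun i : ι => (hzG (Set.mem_range_self i) : zf i ∈ G)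
  refine ⟨k, hk1,
    fun j => c * wf (en j) * Real.sqrt (‖zf (en j)‖^2 + 1),
    fun j => (Real.sqrt (‖zf (en j)‖^2 + 1))⁻¹ • embGraph m (-(zf (en j))) 1,
    fun j => ys (en j), ?_, ?_, ?_, ?_, ?_⟩
  · intro j
    have h1 := (hwpos (en j)).le
    have h2 := (hsq (en j)).le
    have := hcpos.le
    positivity
  · intro j
    exact hys2 (en j)
  · intro j i
    exact ⟨hrV (hys1 (en j) i).1, (hys1 (en j) i).2⟩
  · intro j
    exact (continuous_normalmap.tendsto (zf (en j))).comp (hys3 (en j))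
  · have hcomp : ∀ j : Fin k,
        (c * wf (en j) * Real.sqrt (‖zf (en j)‖^2 + 1)) •
          ((Real.sqrt (‖zf (en j)‖^2 + 1))⁻¹ • embGraph m (-(zf (en j))) 1)
        = embGraph m ((c * wf (en j)) • (-(zf (en j)))) (c * wf (en j)) := by
      intro j
      rw [smul_smul]
      have h3 : c * wf (en j) * Real.sqrt (‖zf (en j)‖ ^ 2 + 1) *
          (Real.sqrt (‖zf (en j)‖ ^ 2 + 1))⁻¹ = c * wf (en j) := by
        field_simp
      rw [h3, embGraph_smul, mul_one]
    have hsum1 : (∑ j : Fin k, (c * wf (en j) * Real.sqrt (‖zf (en j)‖^2 + 1)) •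
        ((Real.sqrt (‖zf (en j)‖^2 + 1))⁻¹ • embGraph m (-(zf (en j))) 1)) =
        embGraph m (∑ j : Fin k, (c * wf (en j)) • (-(zf (en j))))
          (∑ j : Fin k, c * wf (en j)) := by
      rw [← embGraph_sum]
      exact Finset.sum_congr rfl fun j _ => hcomp j
    have hxp : x - p = embGraph m (c • w) c := by
      rw [hxeq, hpeq, embGraph_sub, hcw]
    have hA : (∑ j : Fin k, (c * wf (en j)) • (-(zf (en j)))) = c • w := by
      rw [Equiv.sum_comp en (fun i => (c * wf i) • (-(zf i)))]
      have h2 : ∑ i : ι, (c * wf i) • (-(zf i)) = (-c) • ∑ i : ι, wf i • zf i := by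
        rw [Finset.smul_sum]
        refine Finset.sum_congr rfl fun i _ => ?_
        module
      rw [h2, hrepr', smul_neg, neg_smul, neg_neg]
    have hB : (∑ j : Fin k, c * wf (en j)) = c := by
      rw [Equiv.sum_comp en (fun i => c * wf i), ← Finset.mul_sum, hwsum', mul_one]
    rw [hxp, hsum1, hA, hB]
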